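/- For every m×m row-stochastic matrix A over the reals, there exists a positive integer d ≤ lcm of some positive integers d₁,…,d_k with d₁ + ⋯ + d_k ≤ m, such that the limit lim_{i→∞} (A^d)^i exists (entrywise). -/

import Mathlib

open Filter Matrix Topology

namespace StochasticPowerAux

attribute [local instance] Matrix.linftyOpNormedAddCommGroup Matrix.linftyOpNormedRing
  Matrix.linftyOpNormedSpace

variable {m : ℕ}

/-- The set of row-stochastic matrices. -/
def stoch (m : ℕ) : Set (Matrix (Fin m) (Fin m) ℝ) :=
  {M | (∀ i j, 0 ≤ M i j) ∧ ∀ i, ∑ j, M i j = 1}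

theorem mul_mem {M N : Matrix (Fin m) (Fin m) ℝ} (hM : M ∈ stoch m) (hN : N ∈ stoch m) :
    M * N ∈ stoch m := by
  refine ⟨fun i j => ?_, fun i => ?_⟩
  · rw [Matrix.mul_apply]
    exact Finset.sum_nonneg fun k _ => mul_nonneg (hM.1 i k) (hN.1 k j)
  · simp only [Matrix.mul_apply]
    rw [Finset.sum_comm]
    calc ∑ k, ∑ j, M i k * N k j = ∑ k, M i k * ∑ j, N k j := by
          simp [Finset.mul_sum]
      _ = 1 := by simp [hN.2, hM.2 i]

theorem one_mem : (1 : Matrix (Fin m) (Fin m) ℝ) ∈ stoch m := by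
  constructor
  · intro i j
    by_cases h : i = j <;> simp [Matrix.one_apply, h]
  · intro i; simp [Matrix.one_apply]

theorem pow_mem {M : Matrix (Fin m) (Fin m) ℝ} (hM : M ∈ stoch m) (n : ℕ) :
    M ^ n ∈ stoch m := by
  induction n with
  | zero => simpa using one_mem
  | succ n ih => rw [pow_succ]; exact mul_mem ih hM

theorem norm_le_one {M : Matrix (Fin m) (Fin m) ℝ} (hM : M ∈ stoch m) : ‖M‖ ≤ 1 := by
  rw [Matrix.linfty_opNorm_def]
  have : ((Finset.univ : Finset (Fin m)).sup fun i => ∑ j, ‖M i j‖₊ : NNReal) ≤ 1 := by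
    refine Finset.sup_le fun i _ => ?_
    have h1 : ((∑ j, ‖M i j‖₊ : NNReal) : ℝ) = ∑ j, M i j := by
      push_cast
      exact Finset.sum_congr rfl fun j _ => Real.norm_of_nonneg (hM.1 i j)
    rw [← NNReal.coe_le_coe, h1, hM.2 i, NNReal.coe_one]
  exact_mod_cast this

theorem isClosed_stoch : IsClosed (stoch m) := by
  have h1 : stoch m = (⋂ i, ⋂ j, {M : Matrix (Fin m) (Fin m) ℝ | 0 ≤ M i j}) ∩
      (⋂ i, {M : Matrix (Fin m) (Fin m) ℝ | ∑ j, M i j = 1}) := by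
    ext M; simp [stoch, forall_and]
  rw [h1]
  apply IsClosed.inter
  · exact isClosed_iInter fun i => isClosed_iInter fun j =>
      isClosed_le continuous_const ((continuous_apply j).comp (continuous_apply i))
  · exact isClosed_iInter fun i => isClosed_eq
      (continuous_finset_sum _ fun j _ => (continuous_apply j).comp (continuous_apply i))
      continuous_const

theorem isCompact_stoch : IsCompact (stoch m) := by
  refine (isCompact_closedBall (0 : Matrix (Fin m) (Fin m) ℝ) 1).of_isClosed_subset
    isClosed_stoch ?_
  intro M hM
  simpa [Metric.mem_closedBall, dist_zero_right] using norm_le_one hM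

/-- The set of cluster points of the sequence of powers of `A`. -/
def om (A : Matrix (Fin m) (Fin m) ℝ) : Set (Matrix (Fin m) (Fin m) ℝ) :=
  {M | MapClusterPt M atTop fun n : ℕ => A ^ n}

variable {A : Matrix (Fin m) (Fin m) ℝ}

theorem om_subset (hA : A ∈ stoch m) : om A ⊆ stoch m := by
  intro M hM
  have h1 : Filter.map (fun n : ℕ => A ^ n) atTop ≤ Filter.principal (stoch m) := by
    rw [Filter.le_principal_iff, Filter.mem_map]
    exact Filter.Eventually.of_forall fun n => pow_mem hA n
  have hM' : ClusterPt M (Filter.map (fun n : ℕ => A ^ n) atTop) := hM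
  have h2 : M ∈ closure (stoch m) := mem_closure_iff_clusterPt.mpr (hM'.mono h1)
  rwa [isClosed_stoch.closure_eq] at h2

theorem om_nonempty (hA : A ∈ stoch m) : (om A).Nonempty := by
  obtain ⟨x, -, hx⟩ := isCompact_stoch.exists_mapClusterPt (f := atTop)
    (u := fun n : ℕ => A ^ n)
    (by rw [Filter.le_principal_iff, Filter.mem_map]
        exact Filter.Eventually.of_forall fun n => pow_mem hA n)
  exact ⟨x, hx⟩

theorem om_isClosed : IsClosed (om A) := isClosed_setOf_clusterPt

theorem freq_of_mem_om {M : Matrix (Fin m) (Fin m) ℝ} (hM : M ∈ om A) :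
    ∀ ε > (0:ℝ), ∀ N : ℕ, ∃ n, N ≤ n ∧ ‖A ^ n - M‖ < ε := by
  intro ε hε N
  have := mapClusterPt_iff_frequently.mp hM (Metric.ball M ε) (Metric.ball_mem_nhds _ hε)
  obtain ⟨n, hn, hball⟩ := frequently_atTop.mp this N
  exact ⟨n, hn, by rwa [Metric.mem_ball, dist_eq_norm] at hball⟩

theorem mem_om_of_freq {M : Matrix (Fin m) (Fin m) ℝ}
    (h : ∀ ε > (0:ℝ), ∀ N : ℕ, ∃ n, N ≤ n ∧ ‖A ^ n - M‖ < ε) : M ∈ om A := by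
  rw [om, Set.mem_setOf_eq, mapClusterPt_iff_frequently]
  intro s hs
  obtain ⟨ε, hε, hball⟩ := Metric.mem_nhds_iff.mp hs
  refine frequently_atTop.mpr fun N => ?_
  obtain ⟨n, hn, hlt⟩ := h ε hε N
  exact ⟨n, hn, hball (by rwa [Metric.mem_ball, dist_eq_norm])⟩

theorem om_mul_mem (hA : A ∈ stoch m) {P Q : Matrix (Fin m) (Fin m) ℝ}
    (hP : P ∈ om A) (hQ : Q ∈ om A) : P * Q ∈ om A := by
  have hQs : Q ∈ stoch m := om_subset hA hQ
  refine mem_om_of_freq (fun ε hε N => ?_)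
  obtain ⟨a, ha, hPa⟩ := freq_of_mem_om hP (ε/2) (by linarith) N
  obtain ⟨b, hb, hQb⟩ := freq_of_mem_om hQ (ε/2) (by linarith) 0
  refine ⟨a + b, le_trans ha (Nat.le_add_right a b), ?_⟩
  have key : A ^ (a+b) - P * Q = A ^ a * (A ^ b - Q) + (A ^ a - P) * Q := by
    rw [pow_add, mul_sub, sub_mul]; abel
  calc ‖A ^ (a+b) - P * Q‖ = ‖A ^ a * (A ^ b - Q) + (A ^ a - P) * Q‖ := by rw [key]
    _ ≤ ‖A ^ a * (A ^ b - Q)‖ + ‖(A ^ a - P) * Q‖ := norm_add_le _ _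
    _ ≤ ‖A ^ a‖ * ‖A ^ b - Q‖ + ‖A ^ a - P‖ * ‖Q‖ :=
        add_le_add (norm_mul_le _ _) (norm_mul_le _ _)
    _ < ε := by
        have h1 : ‖A ^ a‖ ≤ 1 := norm_le_one (pow_mem hA a)
        have h2 : ‖Q‖ ≤ 1 := norm_le_one hQs
        have h3 := mul_le_mul_of_nonneg_right h1 (norm_nonneg (A ^ b - Q))
        have h4 := mul_le_mul_of_nonneg_left h2 (norm_nonneg (A ^ a - P))
        rw [one_mul] at h3
        rw [mul_one] at h4
        linarith

theorem exists_idem (hA : A ∈ stoch m) : ∃ E ∈ om A, E * E = E := by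
  letI sg : Semigroup ↥(om A) :=
    { mul := fun P Q => ⟨P.1 * Q.1, om_mul_mem hA P.2 Q.2⟩
      mul_assoc := fun a b c => Subtype.ext (mul_assoc a.1 b.1 c.1) }
  have homcp : IsCompact (om A) := isCompact_stoch.of_isClosed_subset om_isClosed (om_subset hA)
  letI : CompactSpace ↥(om A) := isCompact_iff_compactSpace.mp homcp
  haveI : Nonempty ↥(om A) := (om_nonempty hA).to_subtype
  obtain ⟨⟨E, hE⟩, hid⟩ := exists_idempotent_of_compact_t2_of_continuous_mul_left
    (M := ↥(om A)) (fun r => (continuous_subtype_val.mul continuous_const).subtype_mk _)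
  exact ⟨E, hE, congrArg Subtype.val hid⟩

theorem eq_of_small {X Y : Matrix (Fin m) (Fin m) ℝ} (h : ∀ ε > (0:ℝ), ‖X - Y‖ < ε) :
    X = Y := by
  have h2 : ‖X - Y‖ ≤ 0 := by
    by_contra h3
    push_neg at h3
    exact absurd (h _ h3) (lt_irrefl _)
  rw [← sub_eq_zero]
  exact norm_le_zero_iff.mp h2

theorem comm_om (hA : A ∈ stoch m) {M : Matrix (Fin m) (Fin m) ℝ} (hM : M ∈ om A) :
    A * M = M * A := by
  refine eq_of_small fun ε hε => ?_
  obtain ⟨n, -, hn⟩ := freq_of_mem_om hM (ε/3) (by linarith) 0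
  have hAn : ‖A‖ ≤ 1 := norm_le_one hA
  have key : A * M - M * A = A * (M - A ^ n) + (A ^ n - M) * A := by
    rw [mul_sub, sub_mul]
    rw [← pow_succ', ← pow_succ]
    abel
  rw [key]
  have h1 : ‖A * (M - A ^ n)‖ ≤ ‖A‖ * ‖M - A ^ n‖ := norm_mul_le _ _
  have h2 : ‖(A ^ n - M) * A‖ ≤ ‖A ^ n - M‖ * ‖A‖ := norm_mul_le _ _
  have h3 : ‖M - A ^ n‖ = ‖A ^ n - M‖ := norm_sub_rev _ _
  calc ‖A * (M - A ^ n) + (A ^ n - M) * A‖ ≤ ‖A * (M - A ^ n)‖ + ‖(A ^ n - M) * A‖ :=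
        norm_add_le _ _
    _ < ε := by
        have h5 := mul_le_mul_of_nonneg_right hAn (norm_nonneg (M - A ^ n))
        have h6 := mul_le_mul_of_nonneg_left hAn (norm_nonneg (A ^ n - M))
        rw [one_mul] at h5
        rw [mul_one] at h6
        rw [h3] at h5 h1
        linarith

theorem tendsto_sub_zero (hA : A ∈ stoch m) {E : Matrix (Fin m) (Fin m) ℝ} (hEom : E ∈ om A)
    (hEst : E ∈ stoch m) (hEid : E * E = E) :
    Tendsto (fun n : ℕ => A ^ n - A ^ n * E) atTop (𝓝 0) := by
  refine Metric.tendsto_atTop.mpr ?_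
  intro ε hε
  obtain ⟨n₀, -, hn₀⟩ := freq_of_mem_om hEom (ε/4) (by linarith) 0
  refine ⟨n₀, fun n hn => ?_⟩
  rw [dist_zero_right]
  have hEn : ‖E‖ ≤ 1 := norm_le_one hEst
  have hsplit : A ^ n - A ^ n * E = A ^ (n - n₀) * (A ^ n₀ - A ^ n₀ * E) := by
    rw [mul_sub, ← mul_assoc, ← pow_add, Nat.sub_add_cancel hn]
  have h7 : A ^ n₀ - A ^ n₀ * E = (A ^ n₀ - E) - (A ^ n₀ - E) * E := by
    rw [sub_mul, hEid]; abel
  have h8 : ‖A ^ n₀ - A ^ n₀ * E‖ ≤ ε/4 + ε/4 := by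
    rw [h7]
    have h9 : ‖(A ^ n₀ - E) * E‖ ≤ ‖A ^ n₀ - E‖ * ‖E‖ := norm_mul_le _ _
    have h10 := mul_le_mul_of_nonneg_left hEn (norm_nonneg (A ^ n₀ - E))
    rw [mul_one] at h10
    calc ‖(A ^ n₀ - E) - (A ^ n₀ - E) * E‖ ≤ ‖A ^ n₀ - E‖ + ‖(A ^ n₀ - E) * E‖ :=
          norm_sub_le _ _
      _ ≤ ε/4 + ε/4 := by linarith
  have h11 : ‖A ^ (n - n₀)‖ ≤ 1 := norm_le_one (pow_mem hA _)
  calc ‖A ^ n - A ^ n * E‖ ≤ ‖A ^ (n - n₀)‖ * ‖A ^ n₀ - A ^ n₀ * E‖ := by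
        rw [hsplit]; exact norm_mul_le _ _
    _ < ε := by nlinarith [norm_nonneg (A ^ n₀ - A ^ n₀ * E), norm_nonneg (A ^ (n - n₀))]

theorem pow_mul_E {E : Matrix (Fin m) (Fin m) ℝ} (hEid : E * E = E) (hcomm : A * E = E * A) :
    ∀ n, 1 ≤ n → (A * E) ^ n = A ^ n * E := by
  intro n hn
  induction n with
  | zero => omega
  | succ n ih =>
    rcases Nat.eq_or_lt_of_le hn with h | h
    · simp [← h]
    · have hn1 : 1 ≤ n := by omega
      rw [pow_succ, ih hn1, pow_succ]
      calc A ^ n * E * (A * E) = A ^ n * (E * A) * E := by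
            simp only [mul_assoc]
        _ = A ^ n * (A * E) * E := by rw [hcomm]
        _ = A ^ n * A * (E * E) := by simp only [mul_assoc]
        _ = A ^ n * A * E := by rw [hEid]

theorem exists_S (hA : A ∈ stoch m) {E : Matrix (Fin m) (Fin m) ℝ} (hEom : E ∈ om A)
    (hEst : E ∈ stoch m) (hEid : E * E = E) (hcomm : A * E = E * A) :
    ∃ S ∈ stoch m, S * E = S ∧ E * S = S ∧ (A * E) * S = E ∧ S * (A * E) = E := by
  set T := A * E with hTdef
  have hTst : T ∈ stoch m := mul_mem hA hEst
  have hcommpow : ∀ q : ℕ, E * A ^ q = A ^ q * E := by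
    intro q
    induction q with
    | zero => simp
    | succ q ih => rw [pow_succ, ← mul_assoc, ih, mul_assoc, ← hcomm, ← mul_assoc]
  have hTpow : ∀ n, 1 ≤ n → T ^ n = A ^ n * E := pow_mul_E hEid hcomm
  have H : ∀ k : ℕ, ∃ n, k ≤ n ∧ ‖A ^ n - E‖ < 1/((k:ℝ)+1) := by
    intro k
    obtain ⟨n, hn1, hn2⟩ := freq_of_mem_om hEom (1/((k:ℝ)+1)) (by positivity) k
    exact ⟨n, hn1, hn2⟩
  choose φ hφ1 hφ2 using H
  have hφtend : Tendsto (fun k => A ^ φ k) atTop (𝓝 E) := by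
    refine tendsto_iff_dist_tendsto_zero.mpr ?_
    refine squeeze_zero (fun k => dist_nonneg) (fun k => ?_)
      tendsto_one_div_add_atTop_nhds_zero_nat
    rw [dist_eq_norm]
    exact le_of_lt (hφ2 k)
  have hφpos : ∀ k : ℕ, 1 ≤ φ (k+1) := fun k => le_trans (by omega) (hφ1 (k+1))
  have hTtend : Tendsto (fun k : ℕ => T ^ φ (k+1)) atTop (𝓝 E) := by
    have h1 : Tendsto (fun k : ℕ => A ^ φ (k+1) * E) atTop (𝓝 (E * E)) :=
      (hφtend.comp (tendsto_add_atTop_nat 1)).mul tendsto_const_nhds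
    rw [hEid] at h1
    exact h1.congr fun k => (hTpow _ (hφpos k)).symm
  haveI : FirstCountableTopology (Matrix (Fin m) (Fin m) ℝ) :=
    inferInstanceAs (FirstCountableTopology (Fin m → Fin m → ℝ))
  obtain ⟨S, hSst, ψ, hψ, hconv⟩ :=
    isCompact_stoch.tendsto_subseq (x := fun k => T ^ (φ (k+1) - 1))
      (fun k => pow_mem hTst _)
  have hψtop : Tendsto ψ atTop atTop := hψ.tendsto_atTop
  have hsub1 : Tendsto (fun l => T ^ φ (ψ l + 1)) atTop (𝓝 E) := hTtend.comp hψtop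
  have hq1 : ∀ l, 1 ≤ φ (ψ l + 1) := fun l => hφpos (ψ l)
  have hTS : T * S = E := by
    have h1 : Tendsto (fun l => T * T ^ (φ (ψ l + 1) - 1)) atTop (𝓝 (T * S)) :=
      tendsto_const_nhds.mul hconv
    have h2 : (fun l => T * T ^ (φ (ψ l + 1) - 1)) = fun l => T ^ φ (ψ l + 1) := by
      funext l
      rw [← pow_succ', Nat.sub_add_cancel (hq1 l)]
    rw [h2] at h1
    exact tendsto_nhds_unique h1 hsub1
  have hST : S * T = E := by
    have h1 : Tendsto (fun l => T ^ (φ (ψ l + 1) - 1) * T) atTop (𝓝 (S * T)) :=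
      hconv.mul tendsto_const_nhds
    have h2 : (fun l => T ^ (φ (ψ l + 1) - 1) * T) = fun l => T ^ φ (ψ l + 1) := by
      funext l
      rw [← pow_succ, Nat.sub_add_cancel (hq1 l)]
    rw [h2] at h1
    exact tendsto_nhds_unique h1 hsub1
  have hpowE : ∀ q, 1 ≤ q → T ^ q * E = T ^ q := by
    intro q hq
    rw [hTpow q hq, mul_assoc, hEid]
  have hEpow : ∀ q, 1 ≤ q → E * T ^ q = T ^ q := by
    intro q hq
    rw [hTpow q hq, ← mul_assoc, hcommpow, mul_assoc, hEid]
  have hqbig : ∀ᶠ l in atTop, 1 ≤ φ (ψ l + 1) - 1 := by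
    filter_upwards [eventually_ge_atTop 1] with l hl
    have : l ≤ ψ l := hψ.le_apply
    have := hφ1 (ψ l + 1)
    omega
  have hSE : S * E = S := by
    have h1 : Tendsto (fun l => T ^ (φ (ψ l + 1) - 1) * E) atTop (𝓝 (S * E)) :=
      hconv.mul tendsto_const_nhds
    have h2 : Tendsto (fun l => T ^ (φ (ψ l + 1) - 1) * E) atTop (𝓝 S) := by
      refine hconv.congr' ?_
      filter_upwards [hqbig] with l hl
      exact (hpowE _ hl).symm
    exact tendsto_nhds_unique h1 h2
  have hES : E * S = S := by
    have h1 : Tendsto (fun l => E * T ^ (φ (ψ l + 1) - 1)) atTop (𝓝 (E * S)) :=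
      tendsto_const_nhds.mul hconv
    have h2 : Tendsto (fun l => E * T ^ (φ (ψ l + 1) - 1)) atTop (𝓝 S) := by
      refine hconv.congr' ?_
      filter_upwards [hqbig] with l hl
      exact (hEpow _ hl).symm
    exact tendsto_nhds_unique h1 h2
  exact ⟨S, hSst, hSE, hES, hTS, hST⟩

end StochasticPowerAux

namespace StochasticPowerAux

variable {m : ℕ}

theorem vecMul_apply (x : Fin m → ℝ) (M : Matrix (Fin m) (Fin m) ℝ) (j : Fin m) :
    (x ᵥ* M) j = ∑ i, x i * M i j := rfl

theorem row_mul (M N : Matrix (Fin m) (Fin m) ℝ) (i : Fin m) : (M * N) i = M i ᵥ* N := by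
  funext j
  simp [Matrix.mul_apply, Matrix.vecMul, dotProduct]

theorem perm_part (hm : 0 < m) (E T S : Matrix (Fin m) (Fin m) ℝ)
    (hE : E ∈ stoch m) (hT : T ∈ stoch m) (hS : S ∈ stoch m)
    (hEid : E * E = E) (hTE : T * E = T) (hET : E * T = T) (hSE : S * E = S)
    (hTS : T * S = E) (hST : S * T = E) :
    ∃ d, 0 < d ∧
      (∃ (k : ℕ) (ds : Fin k → ℕ), 0 < k ∧ (∀ i, 0 < ds i) ∧ (∑ i, ds i) ≤ m ∧
        d ≤ Finset.univ.lcm ds) ∧ T ^ d = E := by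
  classical
  set V : Set (Fin m → ℝ) :=
    {x | (∀ j, 0 ≤ x j) ∧ ∑ j, x j = 1 ∧ x ᵥ* E = x} with hVdef
  -- membership after multiplying by a stochastic matrix fixing E
  have hmemmul : ∀ x ∈ V, ∀ M : Matrix (Fin m) (Fin m) ℝ, M ∈ stoch m → M * E = M →
      x ᵥ* M ∈ V := by
    rintro x ⟨hx0, hx1, hxE⟩ M hMst hME
    refine ⟨fun j => ?_, ?_, ?_⟩
    · rw [vecMul_apply]
      exact Finset.sum_nonneg fun i _ => mul_nonneg (hx0 i) (hMst.1 i j)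
    · show ∑ j, (x ᵥ* M) j = 1
      simp only [vecMul_apply]
      rw [Finset.sum_comm]
      calc ∑ i, ∑ j, x i * M i j = ∑ i, x i * ∑ j, M i j := by simp [Finset.mul_sum]
        _ = 1 := by simp [hMst.2, hx1]
    · rw [Matrix.vecMul_vecMul, hME]
  have hrowV : ∀ i, E i ∈ V := by
    intro i
    refine ⟨hE.1 i, hE.2 i, ?_⟩
    rw [← row_mul, hEid]
  -- V is the convex hull of the rows of E
  have hVconv : Convex ℝ V := by
    rintro x ⟨hx0, hx1, hxE⟩ y ⟨hy0, hy1, hyE⟩ a b ha hb hab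
    refine ⟨fun j => add_nonneg (mul_nonneg ha (hx0 j)) (mul_nonneg hb (hy0 j)), ?_, ?_⟩
    · show ∑ j, (a * x j + b * y j) = 1
      rw [Finset.sum_add_distrib, ← Finset.mul_sum, ← Finset.mul_sum, hx1, hy1]
      simpa using hab
    · rw [Matrix.add_vecMul, Matrix.smul_vecMul, Matrix.smul_vecMul, hxE, hyE]
  have hVhull : convexHull ℝ (Set.range fun i => E i) = V := by
    refine subset_antisymm (convexHull_min ?_ hVconv) ?_
    · rintro x ⟨i, rfl⟩
      exact hrowV i
    · rintro x hx
      obtain ⟨hx0, hx1, hxE⟩ := hx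
      have hxe : x = ∑ i, x i • E i := by
        conv_lhs => rw [← hxE]
        funext j
        rw [vecMul_apply, Finset.sum_apply]
        simp
      have h1 : Finset.univ.centerMass x (fun i => E i) ∈
          convexHull ℝ (Set.range fun i => E i) := by
        refine Finset.centerMass_mem_convexHull _ (fun i _ => hx0 i) ?_
          (fun i _ => Set.mem_range_self i)
        rw [hx1]; norm_num
      rw [Finset.centerMass_eq_of_sum_1 _ _ hx1] at h1
      rwa [hxe]
  have hVcomp : IsCompact V := by
    have hclosed : IsClosed V := by
      have h1 : V = (⋂ j, {x : Fin m → ℝ | 0 ≤ x j}) ∩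
          ({x : Fin m → ℝ | ∑ j, x j = 1} ∩ {x | x ᵥ* E = x}) := by
        ext x
        simp only [Set.mem_inter_iff, Set.mem_iInter, Set.mem_setOf_eq, hVdef]
      rw [h1]
      refine IsClosed.inter (isClosed_iInter fun j =>
        isClosed_le continuous_const (continuous_apply j)) (IsClosed.inter ?_ ?_)
      · exact isClosed_eq (continuous_finset_sum _ fun j _ => continuous_apply j)
          continuous_const
      · refine isClosed_eq ?_ continuous_id
        refine continuous_pi fun j => ?_
        show Continuous fun a : Fin m → ℝ => ∑ i, a i * E i j
        exact continuous_finset_sum _ fun i _ => (continuous_apply i).mul continuous_const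
    refine (isCompact_closedBall (0 : Fin m → ℝ) 1).of_isClosed_subset hclosed ?_
    rintro x ⟨hx0, hx1, -⟩
    rw [Metric.mem_closedBall, dist_zero_right]
    rw [pi_norm_le_iff_of_nonneg (by norm_num)]
    intro i
    rw [Real.norm_of_nonneg (hx0 i)]
    rw [← hx1]
    exact Finset.single_le_sum (fun j _ => hx0 j) (Finset.mem_univ i)
  have hKM : closure (convexHull ℝ (V.extremePoints ℝ)) = V :=
    closure_convexHull_extremePoints hVcomp hVconv
  -- extreme points are permuted
  have hmap : ∀ (M N : Matrix (Fin m) (Fin m) ℝ), M ∈ stoch m → M * E = M →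
      N ∈ stoch m → N * E = N → M * N = E → N * M = E →
      ∀ x ∈ V.extremePoints ℝ, x ᵥ* M ∈ V.extremePoints ℝ := by
    intro M N hMst hME hNst hNE hMN hNM x hx
    obtain ⟨hxV, hxext⟩ := (mem_extremePoints).mp hx
    refine (mem_extremePoints).mpr ⟨hmemmul x hxV M hMst hME, ?_⟩
    intro x₁ hx₁ x₂ hx₂ hseg
    obtain ⟨a, b, ha, hb, hab, heq⟩ := hseg
    have hy₁ : x₁ ᵥ* N ∈ V := hmemmul x₁ hx₁ N hNst hNE
    have hy₂ : x₂ ᵥ* N ∈ V := hmemmul x₂ hx₂ N hNst hNE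
    have hfix : ∀ y ∈ V, (y ᵥ* M) ᵥ* N = y := by
      intro y hy
      rw [Matrix.vecMul_vecMul, hMN]
      exact hy.2.2
    have hfix2 : ∀ y ∈ V, (y ᵥ* N) ᵥ* M = y := by
      intro y hy
      rw [Matrix.vecMul_vecMul, hNM]
      exact hy.2.2
    have hxseg : x ∈ openSegment ℝ (x₁ ᵥ* N) (x₂ ᵥ* N) := by
      refine ⟨a, b, ha, hb, hab, ?_⟩
      have := congrArg (fun y => y ᵥ* N) heq
      rw [Matrix.add_vecMul, Matrix.smul_vecMul, Matrix.smul_vecMul] at this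
      rw [this]
      exact hfix x hxV
    obtain ⟨he₁, he₂⟩ := hxext _ hy₁ _ hy₂ hxseg
    constructor
    · calc x₁ = (x₁ ᵥ* N) ᵥ* M := (hfix2 x₁ hx₁).symm
        _ = x ᵥ* M := by rw [he₁]
    · calc x₂ = (x₂ ᵥ* N) ᵥ* M := (hfix2 x₂ hx₂).symm
        _ = x ᵥ* M := by rw [he₂]
  -- the permutation of extreme points
  have hExtsub : V.extremePoints ℝ ⊆ Set.range (fun i => E i) := by
    rw [← hVhull]
    exact extremePoints_convexHull_subset
  have hfin : (V.extremePoints ℝ).Finite := (Set.finite_range _).subset hExtsub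
  letI := hfin.fintype
  have hTmap := hmap T S hT hTE hS hSE hTS hST
  have hSmap := hmap S T hS hSE hT hTE hST hTS
  have hextV : V.extremePoints ℝ ⊆ V := extremePoints_subset
  let σ : Equiv.Perm ↥(V.extremePoints ℝ) :=
    { toFun := fun e => ⟨e.1 ᵥ* T, hTmap e.1 e.2⟩
      invFun := fun e => ⟨e.1 ᵥ* S, hSmap e.1 e.2⟩
      left_inv := fun e => Subtype.ext (by
        show (e.1 ᵥ* T) ᵥ* S = e.1
        rw [Matrix.vecMul_vecMul, hTS]
        exact (hextV e.2).2.2)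
      right_inv := fun e => Subtype.ext (by
        show (e.1 ᵥ* S) ᵥ* T = e.1
        rw [Matrix.vecMul_vecMul, hST]
        exact (hextV e.2).2.2) }
  set d := orderOf σ with hddef
  have hdpos : 0 < d := orderOf_pos σ
  -- iterating
  have hiter : ∀ (n : ℕ) (e : ↥(V.extremePoints ℝ)), ((σ ^ n) e).1 = e.1 ᵥ* (T ^ n) := by
    intro n
    induction n with
    | zero => intro e; simp [Matrix.vecMul_one]
    | succ n ih =>
      intro e
      rw [pow_succ, Equiv.Perm.mul_apply, ih]
      show ((e.1 ᵥ* T) ᵥ* T ^ n) = e.1 ᵥ* T ^ (n+1)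
      rw [Matrix.vecMul_vecMul, ← pow_succ']
  have hσd : σ ^ d = 1 := by rw [hddef]; exact pow_orderOf_eq_one σ
  have hfixext : ∀ x ∈ V.extremePoints ℝ, x ᵥ* (T ^ d) = x := by
    intro x hx
    have h2 := hiter d ⟨x, hx⟩
    rw [hσd] at h2
    simpa using h2.symm
  -- every element of V is fixed by T ^ d
  have hVfix : ∀ x ∈ V, x ᵥ* (T ^ d) = x := by
    have hFconv : Convex ℝ {x : Fin m → ℝ | x ᵥ* (T ^ d) = x} := by
      rintro x hx y hy a b _ _ _
      show (a • x + b • y) ᵥ* T ^ d = a • x + b • y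
      rw [Matrix.add_vecMul, Matrix.smul_vecMul, Matrix.smul_vecMul, hx, hy]
    have hFclosed : IsClosed {x : Fin m → ℝ | x ᵥ* (T ^ d) = x} := by
      refine isClosed_eq ?_ continuous_id
      refine continuous_pi fun j => ?_
      show Continuous fun a : Fin m → ℝ => ∑ i, a i * (T ^ d) i j
      exact continuous_finset_sum _ fun i _ => (continuous_apply i).mul continuous_const
    intro x hx
    have h1 : V ⊆ {x : Fin m → ℝ | x ᵥ* (T ^ d) = x} := by
      rw [← hKM]
      refine closure_minimal (convexHull_min ?_ hFconv) hFclosed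
      intro y hy
      exact hfixext y hy
    exact h1 hx
  -- T ^ d = E
  have hTdE : T ^ d = E := by
    have hETd : E * T ^ d = T ^ d := by
      have : ∀ n, 1 ≤ n → E * T ^ n = T ^ n := by
        intro n hn
        induction n with
        | zero => omega
        | succ n ih =>
          rcases Nat.eq_or_lt_of_le hn with h | h
          · rw [← h, pow_one, hET]
          · rw [pow_succ, ← mul_assoc, ih (by omega)]
      exact this d hdpos
    funext i j
    have h1 : (T ^ d) i = E i ᵥ* (T ^ d) := by rw [← row_mul, hETd]
    rw [h1, hVfix (E i) (hrowV i)]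
  -- cycle type numerics
  have lcm_pos : ∀ (k : ℕ) (ds : Fin k → ℕ), (∀ i, 0 < ds i) → 0 < Finset.univ.lcm ds := by
    intro k ds hds
    rcases Nat.eq_zero_or_pos (Finset.univ.lcm ds) with h | h
    · exfalso
      obtain ⟨i, -, hi⟩ := Finset.lcm_eq_zero_iff.mp h
      exact absurd hi (Nat.pos_iff_ne_zero.mp (hds i))
    · exact h
  refine ⟨d, hdpos, ?_, hTdE⟩
  have hcard : (Fintype.card ↥(V.extremePoints ℝ)) ≤ m := by
    letI : Fintype ↥(Set.range fun i => E i) := (Set.finite_range _).fintype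
    have h1 : Fintype.card ↥(V.extremePoints ℝ) ≤ Fintype.card ↥(Set.range fun i => E i) :=
      Fintype.card_le_of_injective (Set.inclusion hExtsub) (Set.inclusion_injective hExtsub)
    have h2 : Fintype.card ↥(Set.range fun i => E i) ≤ Fintype.card (Fin m) :=
      Fintype.card_range_le _
    rw [Fintype.card_fin] at h2
    exact le_trans h1 h2
  by_cases hcyc : σ.cycleType = 0
  · have hd1 : d = 1 := by
      rw [hddef, ← Equiv.Perm.lcm_cycleType, hcyc, Multiset.lcm_zero]
    refine ⟨1, fun _ => 1, one_pos, fun _ => one_pos, by simp; omega, ?_⟩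
    rw [hd1]
    exact lcm_pos 1 (fun _ => 1) (fun _ => one_pos)
  · set l := σ.cycleType.toList with hldef
    have hlmem : ∀ i : Fin l.length, l.get i ∈ σ.cycleType := by
      intro i
      rw [← Multiset.mem_toList]
      exact List.get_mem l i
    have hlne : l ≠ [] := by
      simp only [hldef, ne_eq, Multiset.toList_eq_nil]
      exact hcyc
    have hpos : ∀ i : Fin l.length, 0 < l.get i := fun i =>
      lt_of_lt_of_le (by norm_num) (Equiv.Perm.two_le_of_mem_cycleType (hlmem i))
    refine ⟨l.length, fun i => l.get i, List.length_pos_iff.mpr hlne, hpos, ?_, ?_⟩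
    · have hsum : ∑ i : Fin l.length, l.get i = σ.cycleType.sum := by
        rw [show ∑ i : Fin l.length, l.get i = (List.ofFn l.get).sum by
              rw [List.sum_ofFn]]
        rw [List.ofFn_get, hldef, Multiset.sum_toList]
      rw [hsum, Equiv.Perm.sum_cycleType]
      exact le_trans (Finset.card_le_univ _) hcard
    · have hdvd : d ∣ Finset.univ.lcm fun i : Fin l.length => l.get i := by
        rw [hddef, ← Equiv.Perm.lcm_cycleType]
        rw [Multiset.lcm_dvd]
        intro b hb
        rw [hldef] at hlmem ⊢
        rw [← Multiset.mem_toList] at hb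
        obtain ⟨i, hi, hbi⟩ := List.mem_iff_getElem.mp hb
        have : σ.cycleType.toList.get ⟨i, hi⟩ = b := hbi
        rw [← this]
        exact Finset.dvd_lcm (Finset.mem_univ _)
      exact Nat.le_of_dvd (lcm_pos _ _ hpos) hdvd


end StochasticPowerAux

open Filter

theorem stochastic_matrix_power_limit (m : ℕ) (hm : 0 < m)
    (A : Matrix (Fin m) (Fin m) ℝ)
    (hnonneg : ∀ i j, 0 ≤ A i j) (hrow : ∀ i, ∑ j, A i j = 1) :
    ∃ (d : ℕ), 0 < d ∧
      (∃ (k : ℕ) (ds : Fin k → ℕ), 0 < k ∧ (∀ i, 0 < ds i) ∧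
        (∑ i, ds i) ≤ m ∧ d ≤ Finset.univ.lcm ds) ∧
      ∃ L : Matrix (Fin m) (Fin m) ℝ,
        Tendsto (fun i : ℕ => (A ^ d) ^ i) atTop (nhds L) := by
  have hA : A ∈ StochasticPowerAux.stoch m := ⟨hnonneg, hrow⟩
  obtain ⟨E, hEom, hEid⟩ := StochasticPowerAux.exists_idem hA
  have hEst := StochasticPowerAux.om_subset hA hEom
  have hcomm := StochasticPowerAux.comm_om hA hEom
  obtain ⟨S, hSst, hSE, hES, hTS, hST⟩ :=
    StochasticPowerAux.exists_S hA hEom hEst hEid hcomm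
  have hTst := StochasticPowerAux.mul_mem hA hEst
  have hTE : (A * E) * E = A * E := by rw [mul_assoc, hEid]
  have hET : E * (A * E) = A * E := by rw [← mul_assoc, ← hcomm, mul_assoc, hEid]
  obtain ⟨d, hdpos, hds, hTdE⟩ :=
    StochasticPowerAux.perm_part hm E (A * E) S hEst hTst hSst hEid hTE hET hSE hTS hST
  refine ⟨d, hdpos, hds, E, ?_⟩
  have key : Tendsto (fun n : ℕ => A ^ n - A ^ n * E) atTop (nhds 0) :=
    StochasticPowerAux.tendsto_sub_zero hA hEom hEst hEid
  have hdi : Tendsto (fun i : ℕ => d * i) atTop atTop := by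
    refine tendsto_atTop_atTop.mpr fun b => ⟨b, fun a ha => ?_⟩
    calc b ≤ a := ha
      _ ≤ d * a := Nat.le_mul_of_pos_left a hdpos
  have key2 : Tendsto (fun i : ℕ => A ^ (d * i) - A ^ (d * i) * E) atTop (nhds 0) :=
    key.comp hdi
  have h4 : Tendsto (fun i : ℕ => (A ^ (d * i) - A ^ (d * i) * E) + E) atTop (nhds (0 + E)) :=
    key2.add tendsto_const_nhds
  rw [zero_add] at h4
  have hEpow : ∀ i : ℕ, 1 ≤ i → E ^ i = E := by
    intro i hi
    induction i with
    | zero => omega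
    | succ i ih =>
      rcases Nat.eq_or_lt_of_le hi with h | h
      · rw [← h, pow_one]
      · rw [pow_succ, ih (by omega), hEid]
  have heq : (fun i : ℕ => (A ^ (d * i) - A ^ (d * i) * E) + E) =ᶠ[atTop]
      fun i : ℕ => (A ^ d) ^ i := by
    filter_upwards [eventually_ge_atTop 1] with i hi
    have h1 : 1 ≤ d * i := Nat.one_le_iff_ne_zero.mpr (Nat.mul_ne_zero (by omega) (by omega))
    have hpowid := StochasticPowerAux.pow_mul_E hEid hcomm (d * i) h1
    have hAdiE : A ^ (d * i) * E = E := by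
      rw [← hpowid, pow_mul, hTdE, hEpow i hi]
    rw [hAdiE, ← pow_mul]
    abel
  exact h4.congr' heq
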